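/- arXiv:1411.0064 — 3 statements merged into one kernel-verified Lean document; each statement's English description precedes it below -/
import Mathlib

section
/- Let x, y ∈ Δⁿ with π(y − x, x) > 0 (y infective against x). Define ε = min(−π(y − x, x)/π(y − x), 1) if π(y − x) < 0 and ε = 1 otherwise, where π(y − x) = (y − x)^T A (y − x). Let z = (1 − ε)x + εy. Then π(z) > π(x). -/
open Matrix Finset

theorem stmt_2 {n : ℕ} (A : Matrix (Fin n) (Fin n) ℝ)
    (hA : ∀ i j, A i j = A j i)
    (x y : Fin n → ℝ) (hx : x ∈ stdSimplex ℝ (Fin n)) (hy : y ∈ stdSimplex ℝ (Fin n))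
    (hinf : (y - x) ⬝ᵥ (A *ᵥ x) > 0)
    (ε : ℝ)
    (hε : ε = if (y - x) ⬝ᵥ (A *ᵥ (y - x)) < 0 then
        min (-((y - x) ⬝ᵥ (A *ᵥ x)) / ((y - x) ⬝ᵥ (A *ᵥ (y - x)))) 1 else 1)
    (z : Fin n → ℝ) (hz : z = (1 - ε) • x + ε • y) :
    z ⬝ᵥ (A *ᵥ z) > x ⬝ᵥ (A *ᵥ x) := by
  have sym : ∀ u v : Fin n → ℝ, u ⬝ᵥ (A *ᵥ v) = v ⬝ᵥ (A *ᵥ u) := by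
    intro u v
    simp only [dotProduct, mulVec, Finset.mul_sum]
    rw [Finset.sum_comm]
    refine Finset.sum_congr rfl fun i _ => Finset.sum_congr rfl fun j _ => ?_
    rw [hA i j]; ring
  set b : ℝ := (y - x) ⬝ᵥ (A *ᵥ x) with hb
  set c : ℝ := (y - x) ⬝ᵥ (A *ᵥ (y - x)) with hc
  have hzz : z ⬝ᵥ (A *ᵥ z) = x ⬝ᵥ (A *ᵥ x) + 2 * ε * b + ε ^ 2 * c := by
    have hz' : z = x + ε • (y - x) := by
      rw [hz]; funext i; simp [smul_eq_mul]; ring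
    rw [hz', hb, hc]
    have hs := sym x (y - x)
    simp only [add_dotProduct, dotProduct_add, smul_dotProduct, dotProduct_smul,
      mulVec_add, mulVec_smul, smul_eq_mul]
    rw [← hs]
    ring
  rw [hzz]
  rcases lt_or_ge c 0 with hcneg | hcpos
  · have hε' : ε = min (-b / c) 1 := by rw [hε, if_pos hcneg]
    have h1 : ε ≤ -b / c := hε' ▸ min_le_left _ _
    have h2 : ε ≤ 1 := hε' ▸ min_le_right _ _
    have h3 : 0 < -b / c := by
      rw [div_pos_iff]; right; exact ⟨by linarith, hcneg⟩
    have h4 : 0 < ε := hε' ▸ lt_min h3 one_pos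
    have h5 : -b ≤ ε * c := by
      have h := mul_le_mul_of_nonpos_right h1 hcneg.le
      rwa [div_mul_cancel₀ _ (ne_of_lt hcneg)] at h
    nlinarith [mul_le_mul_of_nonneg_left h5 h4.le, mul_pos h4 hinf]
  · have hε' : ε = 1 := by rw [hε, if_neg (not_lt.mpr hcpos)]
    rw [hε']; nlinarith
end

section
/- With the hypotheses of the invasion step (y infective against x, z = (1 − ε)x + εy with ε = ε_y(x) as defined), y is not infective against z, i.e., π(y − z, z) ≤ 0. -/
open Matrix Finset

theorem stmt_3 {n : ℕ} (A : Matrix (Fin n) (Fin n) ℝ)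
    (hA : ∀ i j, A i j = A j i)
    (x y : Fin n → ℝ) (hx : x ∈ stdSimplex ℝ (Fin n)) (hy : y ∈ stdSimplex ℝ (Fin n))
    (hinf : (y - x) ⬝ᵥ (A *ᵥ x) > 0)
    (ε : ℝ)
    (hε : ε = if (y - x) ⬝ᵥ (A *ᵥ (y - x)) < 0 then
        min (-((y - x) ⬝ᵥ (A *ᵥ x)) / ((y - x) ⬝ᵥ (A *ᵥ (y - x)))) 1 else 1)
    (z : Fin n → ℝ) (hz : z = (1 - ε) • x + ε • y) :
    (y - z) ⬝ᵥ (A *ᵥ z) ≤ 0 := by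
  set c := (y - x) ⬝ᵥ (A *ᵥ x) with hc
  set d := (y - x) ⬝ᵥ (A *ᵥ (y - x)) with hd
  have h1 : y - z = (1 - ε) • (y - x) := by
    rw [hz]; funext i; simp [Pi.smul_apply, smul_eq_mul]; ring
  have h2 : z = x + ε • (y - x) := by
    rw [hz]; funext i; simp [Pi.smul_apply, smul_eq_mul]; ring
  have key : (y - z) ⬝ᵥ (A *ᵥ z) = (1 - ε) * (c + ε * d) := by
    rw [h1, h2, smul_dotProduct, mulVec_add, mulVec_smul, dotProduct_add,
      dotProduct_smul, smul_eq_mul, smul_eq_mul]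
  rw [key]
  by_cases hdlt : d < 0
  · rw [if_pos hdlt] at hε
    by_cases hm : -c / d ≤ 1
    · rw [min_eq_left hm] at hε
      have hd0 : d ≠ 0 := ne_of_lt hdlt
      have : c + ε * d = 0 := by rw [hε]; field_simp; ring
      rw [this, mul_zero]
    · rw [min_eq_right (le_of_not_ge hm)] at hε
      rw [hε]; simp
  · rw [if_neg hdlt] at hε
    rw [hε]; simp
end

section
/- With the same setup, let λ_out = Σ_{i∈α} x_i exp(+k‖v_i − D‖) and R_out = (1/k)·ln(λ_out/π(x)). Then for every index j with ‖v_j − D‖ > R_out, one has π(e_j, x) < π(x); that is, every data point strictly outside the outer ball is non-infective. -/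
open Matrix Finset

theorem stmt_9 {n d : ℕ} (v : Fin n → EuclideanSpace ℝ (Fin d)) (k : ℝ) (hk : 0 < k)
    (A : Matrix (Fin n) (Fin n) ℝ)
    (hAdef : ∀ i j, A i j = if i = j then 0 else Real.exp (-k * ‖v i - v j‖))
    (x : Fin n → ℝ) (hx : x ∈ stdSimplex ℝ (Fin n))
    (D : EuclideanSpace ℝ (Fin d)) (hD : D = ∑ i, x i • v i)
    (hπ : 0 < x ⬝ᵥ (A *ᵥ x))
    (lamOut : ℝ) (hlam : lamOut = ∑ i, x i * Real.exp (k * ‖v i - D‖))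
    (j : Fin n)
    (hRout : ‖v j - D‖ > (1 / k) * Real.log (lamOut / (x ⬝ᵥ (A *ᵥ x)))) :
    (A *ᵥ x) j < x ⬝ᵥ (A *ᵥ x) := by
  obtain ⟨hx0, hx1⟩ := hx
  set π := x ⬝ᵥ (A *ᵥ x)
  have hlampos : 0 < lamOut := by
    have h1 : (1:ℝ) ≤ lamOut := by
      rw [hlam, ← hx1]
      apply Finset.sum_le_sum
      intro i _
      nlinarith [Real.one_le_exp (by positivity : 0 ≤ k * ‖v i - D‖), hx0 i]
    linarith
  have h1 : (A *ᵥ x) j ≤ Real.exp (-k * ‖v j - D‖) * lamOut := by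
    rw [hlam, Finset.mul_sum]
    simp only [Matrix.mulVec, dotProduct]
    apply Finset.sum_le_sum
    intro i _
    rcases eq_or_ne j i with rfl | hne
    · rw [hAdef, if_pos rfl, zero_mul]
      have := hx0 j
      positivity
    · rw [hAdef, if_neg hne]
      rw [mul_comm (x i), ← mul_assoc]
      apply mul_le_mul_of_nonneg_right _ (hx0 i)
      rw [← Real.exp_add, Real.exp_le_exp]
      have htri : ‖v j - D‖ - ‖v i - D‖ ≤ ‖v j - v i‖ := by
        have := norm_sub_norm_le (v j - D) (v i - D)
        simpa [sub_sub_sub_cancel_right] using this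
      nlinarith [htri]
  have h2 : Real.exp (-k * ‖v j - D‖) * lamOut < π := by
    have hk' : k * ‖v j - D‖ > Real.log (lamOut / π) := by
      have := (mul_lt_mul_iff_right₀ hk).mpr hRout
      rwa [← mul_assoc, mul_one_div, div_self hk.ne', one_mul] at this
    have := Real.exp_lt_exp.mpr hk'
    rw [Real.exp_log (div_pos hlampos hπ)] at this
    rw [div_lt_iff₀ hπ] at this
    calc Real.exp (-k * ‖v j - D‖) * lamOut
        < Real.exp (-k * ‖v j - D‖) * (Real.exp (k * ‖v j - D‖) * π) := by
          apply mul_lt_mul_of_pos_left this (Real.exp_pos _)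
      _ = π := by rw [← mul_assoc, ← Real.exp_add]; ring_nf; simp
  linarith
end
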